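/- Let ρ_ABC be a state on H_A ⊗ H_B ⊗ H_C of the form ρ_ABC = ∑_i q_i ρ^i_{A B_L} ⊗ ρ^i_{B_R C}, where H_B = ⊕_i H^i_{B_L} ⊗ H^i_{B_R} is an orthogonal decomposition, q_i ≥ 0, ∑ q_i = 1. Then I(A:C|B) = 0, i.e., S(AB) + S(BC) = S(ABC) + S(B). -/

import Mathlib

open scoped Classical ComplexOrder

/-- von Neumann entropy of a (Hermitian) matrix, via its spectrum. -/
noncomputable def vnEntropy {n : Type*} [Fintype n] [DecidableEq n]
    (ρ : Matrix n n ℂ) : ℝ :=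
  if h : ρ.IsHermitian then -∑ i, h.eigenvalues i * Real.log (h.eigenvalues i) else 0

/-- Partial trace over the third factor. -/
noncomputable def ptrC {α β γ : Type*} [Fintype γ]
    (ρ : Matrix (α × β × γ) (α × β × γ) ℂ) : Matrix (α × β) (α × β) ℂ :=
  Matrix.of fun p q => ∑ c, ρ (p.1, p.2, c) (q.1, q.2, c)

/-- Partial trace over the first factor. -/
noncomputable def ptrA {α β γ : Type*} [Fintype α]
    (ρ : Matrix (α × β × γ) (α × β × γ) ℂ) : Matrix (β × γ) (β × γ) ℂ :=
  Matrix.of fun p q => ∑ a, ρ (a, p.1, p.2) (a, q.1, q.2)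

/-- Partial trace over the first and third factors. -/
noncomputable def ptrAC {α β γ : Type*} [Fintype α] [Fintype γ]
    (ρ : Matrix (α × β × γ) (α × β × γ) ℂ) : Matrix β β ℂ :=
  Matrix.of fun b b' => ∑ a, ∑ c, ρ (a, b, c) (a, b', c)

section
variable {nA nC k : ℕ} {bL bR : Fin k → ℕ}

/-- The state `ρ_ABC = ∑ᵢ wᵢ ρ¹ᵢ_{A B_L} ⊗ ρ²ᵢ_{B_R C}` associated to an orthogonal
decomposition `H_B = ⊕ᵢ H^i_{B_L} ⊗ H^i_{B_R}` (realised as a sigma type). -/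
noncomputable def blockDM (w : Fin k → ℝ)
    (ρ₁ : ∀ i : Fin k, Matrix (Fin nA × Fin (bL i)) (Fin nA × Fin (bL i)) ℂ)
    (ρ₂ : ∀ i : Fin k, Matrix (Fin (bR i) × Fin nC) (Fin (bR i) × Fin nC) ℂ) :
    Matrix (Fin nA × (Σ i : Fin k, Fin (bL i) × Fin (bR i)) × Fin nC)
           (Fin nA × (Σ i : Fin k, Fin (bL i) × Fin (bR i)) × Fin nC) ℂ :=
  Matrix.of fun p q =>
    if h : p.2.1.1 = q.2.1.1 then
      ((w p.2.1.1 : ℂ)) *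
        ρ₁ p.2.1.1 (p.1, p.2.1.2.1) (q.1, Fin.cast (congrArg bL h.symm) q.2.1.2.1) *
        ρ₂ p.2.1.1 (p.2.1.2.2, p.2.2) (Fin.cast (congrArg bR h.symm) q.2.1.2.2, q.2.2)
    else 0

end

open Matrix Polynomial Kronecker

private lemma xlogx_mul (x y : ℝ) :
    (x * y) * Real.log (x * y) = y * (x * Real.log x) + x * (y * Real.log y) := by
  rcases eq_or_ne x 0 with rfl | hx
  · simp
  rcases eq_or_ne y 0 with rfl | hy
  · simp
  rw [Real.log_mul hx hy]; ring

private lemma charpoly_conj {n : Type*} [Fintype n] [DecidableEq n]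
    (U V M : Matrix n n ℂ) (hUV : U * V = 1) (hVU : V * U = 1) :
    (U * M * V).charpoly = M.charpoly := by
  have hone : (U.map (C : ℂ →+* ℂ[X])) * (V.map (C : ℂ →+* ℂ[X])) = 1 := by
    rw [← Matrix.map_mul, hUV, Matrix.map_one _ (map_zero _) (map_one _)]
  have key : charmatrix (U * M * V) =
      U.map (C : ℂ →+* ℂ[X]) * charmatrix M * V.map (C : ℂ →+* ℂ[X]) := by
    rw [charmatrix, charmatrix, RingHom.mapMatrix_apply, RingHom.mapMatrix_apply,
      Matrix.map_mul, Matrix.map_mul]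
    rw [Matrix.mul_sub, Matrix.sub_mul]
    congr 1
    · rw [← (scalar_commute (X : ℂ[X]) (fun r' => Commute.all _ _) (U.map C)).eq,
        Matrix.mul_assoc, hone, Matrix.mul_one]
  rw [Matrix.charpoly, Matrix.charpoly, key, det_mul, det_mul]
  have : (U.map (C : ℂ →+* ℂ[X])).det * (V.map (C : ℂ →+* ℂ[X])).det = 1 := by
    rw [← det_mul, hone, det_one]
  calc (U.map (C : ℂ →+* ℂ[X])).det * (charmatrix M).det * (V.map (C : ℂ →+* ℂ[X])).det
      = ((U.map (C : ℂ →+* ℂ[X])).det * (V.map (C : ℂ →+* ℂ[X])).det) * (charmatrix M).det := by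
        ring
    _ = (charmatrix M).det := by rw [this, one_mul]

private lemma charpoly_diag {n : Type*} [Fintype n] [DecidableEq n] (d : n → ℂ) :
    (Matrix.diagonal d).charpoly = ∏ i, (X - C (d i)) := by
  have h : charmatrix (Matrix.diagonal d) = Matrix.diagonal fun i => (X - C (d i)) := by
    rw [charmatrix, RingHom.mapMatrix_apply, scalar_apply,
      Matrix.diagonal_map (map_zero _), ← Matrix.diagonal_sub]
  rw [Matrix.charpoly, h, det_diagonal]

private lemma roots_of_rep {n : Type*} [Fintype n] [DecidableEq n]
    {M U V : Matrix n n ℂ} {d : n → ℂ} (hUV : U * V = 1) (hVU : V * U = 1)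
    (h : M = U * Matrix.diagonal d * V) :
    M.charpoly.roots = Finset.univ.val.map d := by
  rw [h, charpoly_conj U V _ hUV hVU, charpoly_diag, Finset.prod_eq_multiset_prod]
  rw [show (Finset.univ.val.map fun i => X - C (d i))
      = (Finset.univ.val.map d).map fun a => X - C a by rw [Multiset.map_map]; rfl]
  exact Polynomial.roots_multiset_prod_X_sub_C _

private lemma vnEntropy_of_rep {n : Type*} [Fintype n] [DecidableEq n]
    {M U : Matrix n n ℂ} {d : n → ℝ} (hUV : U * star U = 1) (hVU : star U * U = 1)
    (h : M = U * Matrix.diagonal (fun i => (d i : ℂ)) * star U) :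
    vnEntropy M = -∑ i, d i * Real.log (d i) := by
  have hdiag : (Matrix.diagonal (fun i => (d i : ℂ)))ᴴ = Matrix.diagonal fun i => (d i : ℂ) := by
    rw [diagonal_conjTranspose]
    have : (star fun i => ((d i : ℂ))) = fun i => ((d i : ℂ)) := by
      funext i
      show star ((d i : ℂ)) = _
      rw [Complex.star_def, Complex.conj_ofReal]
    rw [this]
  have hM : M.IsHermitian := by
    rw [h]
    show (U * Matrix.diagonal (fun i => (d i : ℂ)) * star U)ᴴ = _
    rw [conjTranspose_mul, conjTranspose_mul, hdiag, Matrix.star_eq_conjTranspose,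
      conjTranspose_conjTranspose, Matrix.mul_assoc]
  have r1 : M.charpoly.roots = Finset.univ.val.map (fun i => (d i : ℂ)) :=
    roots_of_rep hUV hVU h
  have hW : (hM.eigenvectorUnitary : Matrix n n ℂ) * star (hM.eigenvectorUnitary : Matrix n n ℂ) = 1 :=
    mem_unitaryGroup_iff.mp (hM.eigenvectorUnitary).2
  have hW' : star (hM.eigenvectorUnitary : Matrix n n ℂ) * (hM.eigenvectorUnitary : Matrix n n ℂ) = 1 :=
    mem_unitaryGroup_iff'.mp (hM.eigenvectorUnitary).2
  have r2 : M.charpoly.roots = Finset.univ.val.map (fun i => (hM.eigenvalues i : ℂ)) :=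
    roots_of_rep hW hW' hM.spectral_theorem
  have hsum := congrArg
    (fun s : Multiset ℂ => (s.map (fun z : ℂ => z.re * Real.log z.re)).sum)
    (r2.symm.trans r1)
  simp only [Multiset.map_map, Function.comp] at hsum
  rw [vnEntropy, dif_pos hM]
  rw [Finset.sum_eq_multiset_sum, Finset.sum_eq_multiset_sum]
  simp only [Complex.ofReal_re] at hsum
  rw [← hsum]

private lemma eig_sum {n : Type*} [Fintype n] [DecidableEq n]
    {M : Matrix n n ℂ} (hM : M.IsHermitian) (ht : M.trace = 1) :
    ∑ i, hM.eigenvalues i = 1 := by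
  have hW' : star (hM.eigenvectorUnitary : Matrix n n ℂ) * (hM.eigenvectorUnitary : Matrix n n ℂ) = 1 :=
    mem_unitaryGroup_iff'.mp (hM.eigenvectorUnitary).2
  have h : M.trace = (Matrix.diagonal (RCLike.ofReal ∘ hM.eigenvalues) : Matrix n n ℂ).trace := by
    conv_lhs => rw [hM.spectral_theorem]
    rw [Unitary.conjStarAlgAut_apply, Matrix.trace_mul_comm, ← Matrix.mul_assoc, hW', Matrix.one_mul]
  rw [ht, Matrix.trace_diagonal] at h
  have : ((∑ i, hM.eigenvalues i : ℝ) : ℂ) = ((1:ℝ) : ℂ) := by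
    push_cast
    rw [h]
    simp [Function.comp, RCLike.ofReal_alg]
  exact_mod_cast this

open Kronecker in
private lemma kron_conjT {m n : Type*} (A : Matrix m m ℂ) (B : Matrix n n ℂ) :
    (A ⊗ₖ B)ᴴ = Aᴴ ⊗ₖ Bᴴ := by
  ext ⟨a, b⟩ ⟨c, d⟩
  simp [Matrix.conjTranspose_apply, Matrix.kroneckerMap_apply, star_mul']

private lemma reindex_mul {σ β : Type*} [Fintype σ] [Fintype β] [DecidableEq σ] [DecidableEq β]
    (e : σ ≃ β) (X Y : Matrix σ σ ℂ) :
    Matrix.reindex e e X * Matrix.reindex e e Y = Matrix.reindex e e (X * Y) := by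
  simp [Matrix.reindex_apply, Matrix.submatrix_mul_equiv]

private lemma reindex_diagonal {σ β : Type*} [DecidableEq σ] [DecidableEq β]
    (e : σ ≃ β) (f : σ → ℂ) :
    Matrix.reindex e e (Matrix.diagonal f) = Matrix.diagonal (f ∘ e.symm) := by
  ext x y
  rcases eq_or_ne x y with rfl | h
  · simp
  · rw [Matrix.reindex_apply, Matrix.submatrix_apply,
      Matrix.diagonal_apply_ne _ (fun hc => h (e.symm.injective hc)),
      Matrix.diagonal_apply_ne _ h]

open Kronecker in
private lemma vnEntropy_block {k : ℕ} {m n : Fin k → Type} [∀ i, Fintype (m i)]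
    [∀ i, DecidableEq (m i)] [∀ i, Fintype (n i)] [∀ i, DecidableEq (n i)]
    {β : Type} [Fintype β] [DecidableEq β]
    (e : (Σ i : Fin k, m i × n i) ≃ β) (w : Fin k → ℝ)
    (A : ∀ i, Matrix (m i) (m i) ℂ) (B : ∀ i, Matrix (n i) (n i) ℂ)
    (hA : ∀ i, (A i).IsHermitian) (hB : ∀ i, (B i).IsHermitian)
    (tA : ∀ i, (A i).trace = 1) (tB : ∀ i, (B i).trace = 1)
    (M : Matrix β β ℂ)
    (hM : M = Matrix.reindex e e (Matrix.blockDiagonal' fun i => (w i : ℂ) • (A i ⊗ₖ B i))) :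
    vnEntropy M = ∑ i, (-(w i * Real.log (w i)) + w i * (vnEntropy (A i) + vnEntropy (B i))) := by
  set αv : ∀ i, m i → ℝ := fun i => (hA i).eigenvalues with hαv
  set βv : ∀ i, n i → ℝ := fun i => (hB i).eigenvalues with hβv
  set Ui : ∀ i, Matrix (m i) (m i) ℂ := fun i => ((hA i).eigenvectorUnitary : Matrix (m i) (m i) ℂ) with hUi
  set Vi : ∀ i, Matrix (n i) (n i) ℂ := fun i => ((hB i).eigenvectorUnitary : Matrix (n i) (n i) ℂ) with hVi
  have hUi1 : ∀ i, Ui i * (Ui i)ᴴ = 1 := fun i =>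
    Matrix.mem_unitaryGroup_iff.mp ((hA i).eigenvectorUnitary).2
  have hUi1' : ∀ i, (Ui i)ᴴ * Ui i = 1 := fun i =>
    Matrix.mem_unitaryGroup_iff'.mp ((hA i).eigenvectorUnitary).2
  have hVi1 : ∀ i, Vi i * (Vi i)ᴴ = 1 := fun i =>
    Matrix.mem_unitaryGroup_iff.mp ((hB i).eigenvectorUnitary).2
  have hVi1' : ∀ i, (Vi i)ᴴ * Vi i = 1 := fun i =>
    Matrix.mem_unitaryGroup_iff'.mp ((hB i).eigenvectorUnitary).2
  set U : Matrix β β ℂ := Matrix.reindex e e (Matrix.blockDiagonal' fun i => Ui i ⊗ₖ Vi i) with hU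
  set G : (Σ i : Fin k, m i × n i) → ℝ := fun s => w s.1 * αv s.1 s.2.1 * βv s.1 s.2.2 with hG
  set d : β → ℝ := fun x => G (e.symm x) with hd
  have hstarU : star U = Matrix.reindex e e (Matrix.blockDiagonal' fun i => (Ui i ⊗ₖ Vi i)ᴴ) := by
    rw [hU]
    show (Matrix.reindex e e _)ᴴ = _
    rw [Matrix.conjTranspose_reindex, Matrix.blockDiagonal'_conjTranspose]
  have hUV : U * star U = 1 := by
    rw [hstarU, hU, reindex_mul, ← Matrix.blockDiagonal'_mul]
    have h2 : (fun i => (Ui i ⊗ₖ Vi i) * (Ui i ⊗ₖ Vi i)ᴴ) = fun i =>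
        (1 : Matrix (m i × n i) (m i × n i) ℂ) := by
      funext i
      rw [kron_conjT, ← Matrix.mul_kronecker_mul, hUi1 i, hVi1 i, Matrix.one_kronecker_one]
    rw [h2]
    have h1 : (Matrix.blockDiagonal' fun i : Fin k =>
        (1 : Matrix (m i × n i) (m i × n i) ℂ)) = 1 := Matrix.blockDiagonal'_one
    rw [h1, Matrix.reindex_apply, Matrix.submatrix_one_equiv]
  have hVU : star U * U = 1 := by
    rw [hstarU, hU, reindex_mul, ← Matrix.blockDiagonal'_mul]
    have h2 : (fun i => (Ui i ⊗ₖ Vi i)ᴴ * (Ui i ⊗ₖ Vi i)) = fun i =>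
        (1 : Matrix (m i × n i) (m i × n i) ℂ) := by
      funext i
      rw [kron_conjT, ← Matrix.mul_kronecker_mul, hUi1' i, hVi1' i, Matrix.one_kronecker_one]
    rw [h2]
    have h1 : (Matrix.blockDiagonal' fun i : Fin k =>
        (1 : Matrix (m i × n i) (m i × n i) ℂ)) = 1 := Matrix.blockDiagonal'_one
    rw [h1, Matrix.reindex_apply, Matrix.submatrix_one_equiv]
  have hblock : ∀ i, (w i : ℂ) • (A i ⊗ₖ B i) =
      (Ui i ⊗ₖ Vi i) *
        Matrix.diagonal (fun p : m i × n i => ((w i * αv i p.1 * βv i p.2 : ℝ) : ℂ)) *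
        (Ui i ⊗ₖ Vi i)ᴴ := by
    intro i
    rw [kron_conjT]
    have hsA := (hA i).spectral_theorem
    have hsB := (hB i).spectral_theorem
    rw [Unitary.conjStarAlgAut_apply, Matrix.star_eq_conjTranspose] at hsA hsB
    have hdiag : Matrix.diagonal (fun p : m i × n i => ((w i * αv i p.1 * βv i p.2 : ℝ) : ℂ))
        = (w i : ℂ) • (Matrix.diagonal (RCLike.ofReal ∘ αv i) ⊗ₖ
            Matrix.diagonal (RCLike.ofReal ∘ βv i)) := by
      rw [Matrix.diagonal_kronecker_diagonal, ← Matrix.diagonal_smul]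
      refine congrArg Matrix.diagonal (funext fun p => ?_)
      show ((w i * αv i p.1 * βv i p.2 : ℝ) : ℂ)
          = (w i : ℂ) * (((αv i p.1 : ℝ) : ℂ) * ((βv i p.2 : ℝ) : ℂ))
      push_cast
      ring
    rw [hdiag, Matrix.mul_smul, Matrix.smul_mul]
    congr 1
    conv_lhs => rw [hsA, hsB]
    rw [Matrix.mul_kronecker_mul, Matrix.mul_kronecker_mul]
  have hrep : M = U * Matrix.diagonal (fun x => (d x : ℂ)) * star U := by
    rw [hstarU, hU]
    have hdg : Matrix.diagonal (fun x : β => (d x : ℂ)) =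
        Matrix.reindex e e (Matrix.blockDiagonal' fun i =>
          Matrix.diagonal (fun p : m i × n i => ((w i * αv i p.1 * βv i p.2 : ℝ) : ℂ))) := by
      rw [Matrix.blockDiagonal'_diagonal, reindex_diagonal]
      rfl
    rw [hdg, reindex_mul, reindex_mul, ← Matrix.blockDiagonal'_mul, ← Matrix.blockDiagonal'_mul]
    rw [hM]
    refine congrArg _ (congrArg Matrix.blockDiagonal' ?_)
    funext i
    exact hblock i
  have hent := vnEntropy_of_rep hUV hVU hrep
  have hsum : ∑ x : β, d x * Real.log (d x)
      = ∑ s : (Σ i : Fin k, m i × n i), G s * Real.log (G s) :=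
    Equiv.sum_comp e.symm (fun s => G s * Real.log (G s))
  have hsig : ∑ s : (Σ i : Fin k, m i × n i), G s * Real.log (G s)
      = ∑ i, ∑ p : m i × n i, G ⟨i, p⟩ * Real.log (G ⟨i, p⟩) := by
    rw [← Finset.univ_sigma_univ, Finset.sum_sigma]
  have hinner : ∀ i, ∑ p : m i × n i, G ⟨i, p⟩ * Real.log (G ⟨i, p⟩)
      = w i * Real.log (w i) + w i * (∑ a, αv i a * Real.log (αv i a))
        + w i * (∑ b, βv i b * Real.log (βv i b)) := by
    intro i
    have hsA : ∑ a, αv i a = 1 := eig_sum (hA i) (tA i)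
    have hsB : ∑ b, βv i b = 1 := eig_sum (hB i) (tB i)
    rw [Fintype.sum_prod_type]
    have inner : ∀ a, ∑ b, G ⟨i, (a, b)⟩ * Real.log (G ⟨i, (a, b)⟩)
        = (w i * αv i a) * Real.log (w i * αv i a)
          + (w i * αv i a) * (∑ b, βv i b * Real.log (βv i b)) := by
      intro a
      have hterm : ∀ b, G ⟨i, (a, b)⟩ * Real.log (G ⟨i, (a, b)⟩)
          = βv i b * ((w i * αv i a) * Real.log (w i * αv i a))
            + (w i * αv i a) * (βv i b * Real.log (βv i b)) := by
        intro b
        show ((w i * αv i a) * βv i b) * Real.log ((w i * αv i a) * βv i b) = _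
        exact xlogx_mul _ _
      rw [Finset.sum_congr rfl fun b _ => hterm b, Finset.sum_add_distrib,
        ← Finset.sum_mul, hsB, one_mul, ← Finset.mul_sum]
    rw [Finset.sum_congr rfl fun a _ => inner a, Finset.sum_add_distrib]
    have h1 : ∑ a, (w i * αv i a) * Real.log (w i * αv i a)
        = w i * Real.log (w i) + w i * (∑ a, αv i a * Real.log (αv i a)) := by
      have hterm : ∀ a, (w i * αv i a) * Real.log (w i * αv i a)
          = αv i a * (w i * Real.log (w i)) + w i * (αv i a * Real.log (αv i a)) :=
        fun a => xlogx_mul _ _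
      rw [Finset.sum_congr rfl fun a _ => hterm a, Finset.sum_add_distrib,
        ← Finset.sum_mul, hsA, one_mul, ← Finset.mul_sum]
    have h2 : ∑ a, (w i * αv i a) * (∑ b, βv i b * Real.log (βv i b))
        = w i * (∑ b, βv i b * Real.log (βv i b)) := by
      rw [← Finset.sum_mul, ← Finset.mul_sum, hsA, mul_one]
    rw [h1, h2, add_assoc]
  have hvA : ∀ i, vnEntropy (A i) = -∑ a, αv i a * Real.log (αv i a) := fun i => by
    rw [vnEntropy, dif_pos (hA i)]
  have hvB : ∀ i, vnEntropy (B i) = -∑ b, βv i b * Real.log (βv i b) := fun i => by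
    rw [vnEntropy, dif_pos (hB i)]
  rw [hent, hsum, hsig, Finset.sum_congr rfl fun i _ => hinner i, ← Finset.sum_neg_distrib]
  refine Finset.sum_congr rfl fun i _ => ?_
  rw [hvA i, hvB i]
  ring

private lemma fin_cast_self {n : ℕ} (h : n = n) (x : Fin n) : Fin.cast h x = x :=
  Fin.ext (by simp)

private lemma herm_entry {σ : Type*} {M : Matrix σ σ ℂ} (h : M.IsHermitian) (x y : σ) :
    star (M x y) = M y x := by
  conv_rhs => rw [← h]
  rw [Matrix.conjTranspose_apply]


/-- If `ρ_ABC = ∑ᵢ qᵢ ρ¹ᵢ_{A B_L} ⊗ ρ²ᵢ_{B_R C}` with respect to an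
orthogonal decomposition `H_B = ⊕ᵢ H^i_{B_L} ⊗ H^i_{B_R}`, then `I(A:C|B) = 0`,
i.e. `S(AB) + S(BC) = S(ABC) + S(B)`. -/
theorem blockDM_vanishing_CMI (nA nC k : ℕ) (bL bR : Fin k → ℕ)
    (w : Fin k → ℝ)
    (ρ₁ : ∀ i : Fin k, Matrix (Fin nA × Fin (bL i)) (Fin nA × Fin (bL i)) ℂ)
    (ρ₂ : ∀ i : Fin k, Matrix (Fin (bR i) × Fin nC) (Fin (bR i) × Fin nC) ℂ)
    (hw : ∀ i, 0 ≤ w i) (hws : ∑ i, w i = 1)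
    (hρ₁ : ∀ i, (ρ₁ i).PosSemidef) (ht₁ : ∀ i, (ρ₁ i).trace = 1)
    (hρ₂ : ∀ i, (ρ₂ i).PosSemidef) (ht₂ : ∀ i, (ρ₂ i).trace = 1) :
    vnEntropy (ptrC (blockDM w ρ₁ ρ₂)) + vnEntropy (ptrA (blockDM w ρ₁ ρ₂)) =
      vnEntropy (blockDM w ρ₁ ρ₂) + vnEntropy (ptrAC (blockDM w ρ₁ ρ₂)) := by
  classical
  set σ₁ : ∀ i : Fin k, Matrix (Fin (bL i)) (Fin (bL i)) ℂ :=
    fun i => Matrix.of fun l l' => ∑ a, ρ₁ i (a, l) (a, l') with hσ₁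
  set σ₂ : ∀ i : Fin k, Matrix (Fin (bR i)) (Fin (bR i)) ℂ :=
    fun i => Matrix.of fun r r' => ∑ c, ρ₂ i (r, c) (r', c) with hσ₂
  have hρ₁h : ∀ i, (ρ₁ i).IsHermitian := fun i => (hρ₁ i).1
  have hρ₂h : ∀ i, (ρ₂ i).IsHermitian := fun i => (hρ₂ i).1
  have hσ₁h : ∀ i, (σ₁ i).IsHermitian := by
    intro i
    ext l l'
    rw [Matrix.conjTranspose_apply]
    show star (∑ a, ρ₁ i (a, l') (a, l)) = ∑ a, ρ₁ i (a, l) (a, l')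
    rw [star_sum]
    exact Finset.sum_congr rfl fun a _ => herm_entry (hρ₁ i).1 _ _
  have hσ₂h : ∀ i, (σ₂ i).IsHermitian := by
    intro i
    ext r r'
    rw [Matrix.conjTranspose_apply]
    show star (∑ c, ρ₂ i (r', c) (r, c)) = ∑ c, ρ₂ i (r, c) (r', c)
    rw [star_sum]
    exact Finset.sum_congr rfl fun c _ => herm_entry (hρ₂ i).1 _ _
  have hσ₁t : ∀ i, (σ₁ i).trace = 1 := by
    intro i
    rw [← ht₁ i]
    show ∑ l, ∑ a, ρ₁ i (a, l) (a, l) = ∑ p : Fin nA × Fin (bL i), ρ₁ i p p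
    rw [Fintype.sum_prod_type]
    rw [Finset.sum_comm]
  have hσ₂t : ∀ i, (σ₂ i).trace = 1 := by
    intro i
    rw [← ht₂ i]
    show ∑ r, ∑ c, ρ₂ i (r, c) (r, c) = ∑ p : Fin (bR i) × Fin nC, ρ₂ i p p
    rw [Fintype.sum_prod_type]
  -- the equivalences
  set eABC : (Σ i : Fin k, (Fin nA × Fin (bL i)) × (Fin (bR i) × Fin nC)) ≃
      (Fin nA × (Σ i : Fin k, Fin (bL i) × Fin (bR i)) × Fin nC) :=
    { toFun := fun s => (s.2.1.1, ⟨s.1, (s.2.1.2, s.2.2.1)⟩, s.2.2.2)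
      invFun := fun x => ⟨x.2.1.1, ((x.1, x.2.1.2.1), (x.2.1.2.2, x.2.2))⟩
      left_inv := fun s => rfl
      right_inv := fun x => rfl } with heABC
  set eAB : (Σ i : Fin k, (Fin nA × Fin (bL i)) × Fin (bR i)) ≃
      (Fin nA × (Σ i : Fin k, Fin (bL i) × Fin (bR i))) :=
    { toFun := fun s => (s.2.1.1, ⟨s.1, (s.2.1.2, s.2.2)⟩)
      invFun := fun x => ⟨x.2.1, ((x.1, x.2.2.1), x.2.2.2)⟩
      left_inv := fun s => rfl
      right_inv := fun x => rfl } with heAB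
  set eBC : (Σ i : Fin k, Fin (bL i) × (Fin (bR i) × Fin nC)) ≃
      ((Σ i : Fin k, Fin (bL i) × Fin (bR i)) × Fin nC) :=
    { toFun := fun s => (⟨s.1, (s.2.1, s.2.2.1)⟩, s.2.2.2)
      invFun := fun x => ⟨x.1.1, (x.1.2.1, (x.1.2.2, x.2))⟩
      left_inv := fun s => rfl
      right_inv := fun x => rfl } with heBC
  -- structural identities
  have H3 : blockDM w ρ₁ ρ₂ =
      Matrix.reindex eABC eABC (Matrix.blockDiagonal' fun i => (w i : ℂ) • (ρ₁ i ⊗ₖ ρ₂ i)) := by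
    ext ⟨a, ⟨i, l, r⟩, c⟩ ⟨a', ⟨i', l', r'⟩, c'⟩
    rw [Matrix.reindex_apply, Matrix.submatrix_apply]
    rcases eq_or_ne i i' with rfl | h
    · rw [show eABC.symm (a, ⟨i, (l, r)⟩, c) = ⟨i, ((a, l), (r, c))⟩ from rfl,
        show eABC.symm (a', ⟨i, (l', r')⟩, c') = ⟨i, ((a', l'), (r', c'))⟩ from rfl,
        Matrix.blockDiagonal'_apply_eq]
      show (if h : i = i then
          ((w i : ℂ)) * ρ₁ i (a, l) (a', Fin.cast (congrArg bL h.symm) l') *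
            ρ₂ i (r, c) (Fin.cast (congrArg bR h.symm) r', c')
        else 0) = _
      rw [dif_pos rfl, fin_cast_self, fin_cast_self]
      simp only [Matrix.smul_apply, Matrix.kroneckerMap_apply, smul_eq_mul]
      ring
    · rw [show (blockDM w ρ₁ ρ₂) (a, ⟨i, (l, r)⟩, c) (a', ⟨i', (l', r')⟩, c') =
          dite (i = i') _ (fun _ => 0) from rfl, dif_neg h]
      exact (Matrix.blockDiagonal'_apply_ne _ _ _ h).symm
  have H1 : ptrC (blockDM w ρ₁ ρ₂) =
      Matrix.reindex eAB eAB (Matrix.blockDiagonal' fun i => (w i : ℂ) • (ρ₁ i ⊗ₖ σ₂ i)) := by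
    ext ⟨a, ⟨i, l, r⟩⟩ ⟨a', ⟨i', l', r'⟩⟩
    rw [Matrix.reindex_apply, Matrix.submatrix_apply]
    show (∑ c, blockDM w ρ₁ ρ₂ (a, ⟨i, (l, r)⟩, c) (a', ⟨i', (l', r')⟩, c)) = _
    rcases eq_or_ne i i' with rfl | h
    · rw [show eAB.symm (a, ⟨i, (l, r)⟩) = ⟨i, ((a, l), r)⟩ from rfl,
        show eAB.symm (a', ⟨i, (l', r')⟩) = ⟨i, ((a', l'), r')⟩ from rfl,
        Matrix.blockDiagonal'_apply_eq]
      have hterm : ∀ c : Fin nC, blockDM w ρ₁ ρ₂ (a, ⟨i, (l, r)⟩, c) (a', ⟨i, (l', r')⟩, c)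
          = (w i : ℂ) * ρ₁ i (a, l) (a', l') * ρ₂ i (r, c) (r', c) := by
        intro c
        show (if h : i = i then
            ((w i : ℂ)) * ρ₁ i (a, l) (a', Fin.cast (congrArg bL h.symm) l') *
              ρ₂ i (r, c) (Fin.cast (congrArg bR h.symm) r', c)
          else 0) = _
        rw [dif_pos rfl, fin_cast_self, fin_cast_self]
      rw [Finset.sum_congr rfl fun c _ => hterm c, ← Finset.mul_sum]
      simp only [hσ₂, Matrix.smul_apply, Matrix.kroneckerMap_apply, smul_eq_mul,
        Matrix.of_apply]
      ring
    · have hterm : ∀ c : Fin nC,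
          blockDM w ρ₁ ρ₂ (a, ⟨i, (l, r)⟩, c) (a', ⟨i', (l', r')⟩, c) = 0 := by
        intro c
        show dite (i = i') _ (fun _ => 0) = 0
        rw [dif_neg h]
      rw [Finset.sum_congr rfl fun c _ => hterm c, Finset.sum_const, smul_zero]
      exact (Matrix.blockDiagonal'_apply_ne _ _ _ h).symm
  have H2 : ptrA (blockDM w ρ₁ ρ₂) =
      Matrix.reindex eBC eBC (Matrix.blockDiagonal' fun i => (w i : ℂ) • (σ₁ i ⊗ₖ ρ₂ i)) := by
    ext ⟨⟨i, l, r⟩, c⟩ ⟨⟨i', l', r'⟩, c'⟩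
    rw [Matrix.reindex_apply, Matrix.submatrix_apply]
    show (∑ a, blockDM w ρ₁ ρ₂ (a, ⟨i, (l, r)⟩, c) (a, ⟨i', (l', r')⟩, c')) = _
    rcases eq_or_ne i i' with rfl | h
    · rw [show eBC.symm (⟨i, (l, r)⟩, c) = ⟨i, (l, (r, c))⟩ from rfl,
        show eBC.symm (⟨i, (l', r')⟩, c') = ⟨i, (l', (r', c'))⟩ from rfl,
        Matrix.blockDiagonal'_apply_eq]
      have hterm : ∀ a : Fin nA, blockDM w ρ₁ ρ₂ (a, ⟨i, (l, r)⟩, c) (a, ⟨i, (l', r')⟩, c')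
          = (w i : ℂ) * ρ₁ i (a, l) (a, l') * ρ₂ i (r, c) (r', c') := by
        intro a
        show (if h : i = i then
            ((w i : ℂ)) * ρ₁ i (a, l) (a, Fin.cast (congrArg bL h.symm) l') *
              ρ₂ i (r, c) (Fin.cast (congrArg bR h.symm) r', c')
          else 0) = _
        rw [dif_pos rfl, fin_cast_self, fin_cast_self]
      rw [Finset.sum_congr rfl fun a _ => hterm a]
      simp only [hσ₁, Matrix.smul_apply, Matrix.kroneckerMap_apply, smul_eq_mul,
        Matrix.of_apply]
      calc ∑ a, (w i : ℂ) * ρ₁ i (a, l) (a, l') * ρ₂ i (r, c) (r', c')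
          = (∑ a, (w i : ℂ) * ρ₁ i (a, l) (a, l')) * ρ₂ i (r, c) (r', c') :=
            (Finset.sum_mul _ _ _).symm
        _ = (w i : ℂ) * ((∑ a, ρ₁ i (a, l) (a, l')) * ρ₂ i (r, c) (r', c')) := by
            rw [← Finset.mul_sum]; ring
    · have hterm : ∀ a : Fin nA,
          blockDM w ρ₁ ρ₂ (a, ⟨i, (l, r)⟩, c) (a, ⟨i', (l', r')⟩, c') = 0 := by
        intro a
        show dite (i = i') _ (fun _ => 0) = 0
        rw [dif_neg h]
      rw [Finset.sum_congr rfl fun a _ => hterm a, Finset.sum_const, smul_zero]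
      exact (Matrix.blockDiagonal'_apply_ne _ _ _ h).symm
  have H4 : ptrAC (blockDM w ρ₁ ρ₂) =
      Matrix.reindex (Equiv.refl _) (Equiv.refl _)
        (Matrix.blockDiagonal' fun i => (w i : ℂ) • (σ₁ i ⊗ₖ σ₂ i)) := by
    ext ⟨i, l, r⟩ ⟨i', l', r'⟩
    rw [Matrix.reindex_apply]
    simp only [Equiv.refl_symm, Equiv.coe_refl, Matrix.submatrix_id_id]
    show (∑ a, ∑ c, blockDM w ρ₁ ρ₂ (a, ⟨i, (l, r)⟩, c) (a, ⟨i', (l', r')⟩, c)) = _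
    rcases eq_or_ne i i' with rfl | h
    · rw [Matrix.blockDiagonal'_apply_eq]
      have hterm : ∀ (a : Fin nA) (c : Fin nC),
          blockDM w ρ₁ ρ₂ (a, ⟨i, (l, r)⟩, c) (a, ⟨i, (l', r')⟩, c)
          = (w i : ℂ) * ρ₁ i (a, l) (a, l') * ρ₂ i (r, c) (r', c) := by
        intro a c
        show (if h : i = i then
            ((w i : ℂ)) * ρ₁ i (a, l) (a, Fin.cast (congrArg bL h.symm) l') *
              ρ₂ i (r, c) (Fin.cast (congrArg bR h.symm) r', c)
          else 0) = _
        rw [dif_pos rfl, fin_cast_self, fin_cast_self]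
      rw [Finset.sum_congr rfl fun a _ => Finset.sum_congr rfl fun c _ => hterm a c]
      simp only [hσ₁, hσ₂, Matrix.smul_apply, Matrix.kroneckerMap_apply, smul_eq_mul,
        Matrix.of_apply]
      calc ∑ a, ∑ c, (w i : ℂ) * ρ₁ i (a, l) (a, l') * ρ₂ i (r, c) (r', c)
          = ∑ a, (w i : ℂ) * ρ₁ i (a, l) (a, l') * ∑ c, ρ₂ i (r, c) (r', c) :=
            Finset.sum_congr rfl fun a _ => (Finset.mul_sum _ _ _).symm
        _ = (∑ a, (w i : ℂ) * ρ₁ i (a, l) (a, l')) * ∑ c, ρ₂ i (r, c) (r', c) :=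
            (Finset.sum_mul _ _ _).symm
        _ = (w i : ℂ) * ((∑ a, ρ₁ i (a, l) (a, l')) * ∑ c, ρ₂ i (r, c) (r', c)) := by
            rw [← Finset.mul_sum]; ring
    · have hterm : ∀ (a : Fin nA) (c : Fin nC),
          blockDM w ρ₁ ρ₂ (a, ⟨i, (l, r)⟩, c) (a, ⟨i', (l', r')⟩, c) = 0 := by
        intro a c
        show dite (i = i') _ (fun _ => 0) = 0
        rw [dif_neg h]
      rw [Finset.sum_congr rfl fun a _ => Finset.sum_congr rfl fun c _ => hterm a c]
      simp only [Finset.sum_const, smul_zero]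
      exact (Matrix.blockDiagonal'_apply_ne _ _ _ h).symm
  rw [vnEntropy_block eAB w ρ₁ σ₂ hρ₁h hσ₂h ht₁ hσ₂t _ H1,
    vnEntropy_block eBC w σ₁ ρ₂ hσ₁h hρ₂h hσ₁t ht₂ _ H2,
    vnEntropy_block eABC w ρ₁ ρ₂ hρ₁h hρ₂h ht₁ ht₂ _ H3,
    vnEntropy_block (Equiv.refl _) w σ₁ σ₂ hσ₁h hσ₂h hσ₁t hσ₂t _ H4]
  rw [← Finset.sum_add_distrib, ← Finset.sum_add_distrib]
  exact Finset.sum_congr rfl fun i _ => by ring
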